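/- Let P, Q be probability distributions on a finite set X, π ∈ (0,1/2], and suppose e_π(P,Q) = δ ∈ (0,π). Then with λ* = log((1−π)/δ)/(log((1−π)/δ)+log(π/δ)), we have δ ≥ (1/4) π^{λ*} (1−π)^{1−λ*} (β_{λ*}(P,Q))². -/

import Mathlib

open Real Finset

/-- Hellinger-λ affinity between two distributions on a finite set. -/
noncomputable def betaAff {X : Type*} [Fintype X] (l : ℝ) (P Q : X → ℝ) : ℝ :=
  ∑ x, P x ^ l * Q x ^ (1 - l)

/-- Optimal one-shot Bayes error with prior pr. -/
noncomputable def bayesErr {X : Type*} [Fintype X] (pr : ℝ) (P Q : X → ℝ) : ℝ :=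
  ∑ x, min (pr * P x) ((1 - pr) * Q x)

/-- The optimal exponent λ* of the one-shot Bayes error lower bound. -/
noncomputable def lambdaStar (pr δ : ℝ) : ℝ :=
  Real.log ((1 - pr) / δ) / (Real.log ((1 - pr) / δ) + Real.log (pr / δ))

/-- Two-exponent Hölder inequality for finite sums of nonnegative reals. -/
lemma holder_sum {X : Type*} (s : Finset X) (f g : X → ℝ)
    (hf : ∀ x, 0 ≤ f x) (hg : ∀ x, 0 ≤ g x) {l : ℝ} (h0 : 0 < l) (h1 : l < 1) :
    ∑ x ∈ s, f x ^ l * g x ^ (1 - l) ≤ (∑ x ∈ s, f x) ^ l * (∑ x ∈ s, g x) ^ (1 - l) := by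
  have h1l : (0:ℝ) < 1 - l := by linarith
  have hpq : Real.HolderConjugate (1/l) (1/(1-l)) := by
    constructor
    · rw [one_div, one_div, inv_inv, inv_inv]; ring
    · positivity
    · positivity
  have H := Real.inner_le_Lp_mul_Lq_of_nonneg (s := s) (f := fun x => f x ^ l)
      (g := fun x => g x ^ (1 - l)) hpq
      (fun i _ => Real.rpow_nonneg (hf i) _) (fun i _ => Real.rpow_nonneg (hg i) _)
  have e1 : ∀ x, (f x ^ l) ^ (1/l) = f x := fun x => by
    rw [← Real.rpow_mul (hf x), mul_one_div, div_self h0.ne', Real.rpow_one]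
  have e2 : ∀ x, (g x ^ (1-l)) ^ (1/(1-l)) = g x := fun x => by
    rw [← Real.rpow_mul (hg x), mul_one_div, div_self h1l.ne', Real.rpow_one]
  simpa only [e1, e2, one_div_one_div] using H

set_option maxHeartbeats 1000000 in
theorem one_shot_lower_bound {X : Type*} [Fintype X]
    (P Q : X → ℝ) (hP0 : ∀ x, 0 ≤ P x) (hQ0 : ∀ x, 0 ≤ Q x)
    (hP1 : ∑ x, P x = 1) (hQ1 : ∑ x, Q x = 1)
    (pr δ : ℝ) (hpr : pr ∈ Set.Ioc (0 : ℝ) (1 / 2)) (hδ : δ ∈ Set.Ioo (0 : ℝ) pr)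
    (he : bayesErr pr P Q = δ) :
    δ ≥ (1 / 4) * pr ^ lambdaStar pr δ * (1 - pr) ^ (1 - lambdaStar pr δ) *
      (betaAff (lambdaStar pr δ) P Q) ^ 2 := by
  classical
  obtain ⟨hpr0, hpr2⟩ := hpr
  obtain ⟨hδ0, hδpr⟩ := hδ
  have h1pr : (0:ℝ) < 1 - pr := by linarith
  have hδ1pr : δ < 1 - pr := by linarith
  set A : ℝ := Real.log ((1 - pr) / δ) with hA_def
  set B : ℝ := Real.log (pr / δ) with hB_def
  have hA : 0 < A := Real.log_pos (by rw [lt_div_iff₀ hδ0]; linarith)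
  have hB : 0 < B := Real.log_pos (by rw [lt_div_iff₀ hδ0]; linarith)
  have hAB : 0 < A + B := by linarith
  set l : ℝ := lambdaStar pr δ with hl_def
  have hlAB : l = A / (A + B) := rfl
  have hl0 : 0 < l := by rw [hlAB]; positivity
  have hl1 : l < 1 := by
    rw [hlAB, div_lt_one hAB]; linarith
  have h1l : 1 - l = B / (A + B) := by
    rw [hlAB]; field_simp; ring
  set t : ℝ := Real.exp (A * B / (A + B)) with ht_def
  have ht : 0 < t := Real.exp_pos _
  -- key power identities
  have hpow1 : ((1 - pr) / δ) ^ (1 - l) = t := by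
    rw [Real.rpow_def_of_pos (by positivity), ← hA_def, h1l, ht_def]
    ring_nf
  have hpow2 : (pr / δ) ^ l = t := by
    rw [Real.rpow_def_of_pos (by positivity), ← hB_def, hlAB, ht_def]
    ring_nf
  have key1 : δ ^ l * (1 - pr) ^ (1 - l) = δ * t := by
    have : (1 - pr : ℝ) = δ * ((1 - pr) / δ) := by field_simp
    rw [this, Real.mul_rpow hδ0.le (by positivity), hpow1, ← mul_assoc,
      ← Real.rpow_add hδ0]
    norm_num
  have key2 : pr ^ l * δ ^ (1 - l) = δ * t := by
    have : (pr : ℝ) = δ * (pr / δ) := by field_simp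
    rw [this, Real.mul_rpow hδ0.le (by positivity), hpow2]
    rw [mul_comm (δ ^ l) t, mul_assoc, ← Real.rpow_add hδ0]
    norm_num; ring
  have key3 : pr ^ l * (1 - pr) ^ (1 - l) = δ * t ^ 2 := by
    have e1 : pr ^ l = δ ^ l * t := by
      rw [← hpow2, ← Real.mul_rpow hδ0.le (by positivity)]
      congr 1; field_simp
    have e2 : (1 - pr) ^ (1 - l) = δ ^ (1 - l) * t := by
      rw [← hpow1, ← Real.mul_rpow hδ0.le (by positivity)]
      congr 1; field_simp
    have e3 : δ ^ l * δ ^ (1 - l) = δ := by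
      rw [← Real.rpow_add hδ0]; norm_num
    rw [e1, e2]; nlinarith [e3]
  -- the two measures
  set a : X → ℝ := fun x => pr * P x with ha_def
  set b : X → ℝ := fun x => (1 - pr) * Q x with hb_def
  have ha0 : ∀ x, 0 ≤ a x := fun x => mul_nonneg hpr0.le (hP0 x)
  have hb0 : ∀ x, 0 ≤ b x := fun x => mul_nonneg h1pr.le (hQ0 x)
  set E : Finset X := Finset.univ.filter (fun x => a x ≤ b x) with hE_def
  -- sum of min over any subset is ≤ δ
  have hmin_nonneg : ∀ x, 0 ≤ min (a x) (b x) := fun x => le_min (ha0 x) (hb0 x)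
  have hmin_sum : ∑ x, min (a x) (b x) = δ := he
  have hsub : ∀ s : Finset X, ∑ x ∈ s, min (a x) (b x) ≤ δ := by
    intro s
    rw [← hmin_sum]
    exact Finset.sum_le_sum_of_subset_of_nonneg (Finset.subset_univ s)
      (fun x _ _ => hmin_nonneg x)
  -- bounds on partial sums
  have haE : ∑ x ∈ E, a x ≤ δ := by
    refine le_trans (le_of_eq ?_) (hsub E)
    exact Finset.sum_congr rfl fun x hx => by
      simp only [hE_def, Finset.mem_filter] at hx
      exact (min_eq_left hx.2).symm
  have hbEc : ∑ x ∈ Eᶜ, b x ≤ δ := by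
    refine le_trans (le_of_eq ?_) (hsub Eᶜ)
    exact Finset.sum_congr rfl fun x hx => by
      simp only [hE_def, Finset.mem_compl, Finset.mem_filter, Finset.mem_univ, true_and,
        not_le] at hx
      exact (min_eq_right hx.le).symm
  have hbE : ∑ x ∈ E, b x ≤ 1 - pr := by
    have : ∑ x, b x = 1 - pr := by
      simp only [hb_def, ← Finset.mul_sum, hQ1, mul_one]
    rw [← this]
    exact Finset.sum_le_sum_of_subset_of_nonneg (Finset.subset_univ E) (fun x _ _ => hb0 x)
  have haEc : ∑ x ∈ Eᶜ, a x ≤ pr := by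
    have : ∑ x, a x = pr := by
      simp only [ha_def, ← Finset.mul_sum, hP1, mul_one]
    rw [← this]
    exact Finset.sum_le_sum_of_subset_of_nonneg (Finset.subset_univ Eᶜ) (fun x _ _ => ha0 x)
  -- Hölder on each piece
  have hHE : ∑ x ∈ E, a x ^ l * b x ^ (1 - l) ≤ δ * t := by
    calc ∑ x ∈ E, a x ^ l * b x ^ (1 - l)
        ≤ (∑ x ∈ E, a x) ^ l * (∑ x ∈ E, b x) ^ (1 - l) :=
          holder_sum E a b ha0 hb0 hl0 hl1
      _ ≤ δ ^ l * (1 - pr) ^ (1 - l) :=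
          mul_le_mul (Real.rpow_le_rpow (Finset.sum_nonneg fun x _ => ha0 x) haE hl0.le)
            (Real.rpow_le_rpow (Finset.sum_nonneg fun x _ => hb0 x) hbE (by linarith))
            (Real.rpow_nonneg (Finset.sum_nonneg fun x _ => hb0 x) _)
            (Real.rpow_nonneg hδ0.le _)
      _ = δ * t := key1
  have hHEc : ∑ x ∈ Eᶜ, a x ^ l * b x ^ (1 - l) ≤ δ * t := by
    calc ∑ x ∈ Eᶜ, a x ^ l * b x ^ (1 - l)
        ≤ (∑ x ∈ Eᶜ, a x) ^ l * (∑ x ∈ Eᶜ, b x) ^ (1 - l) :=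
          holder_sum Eᶜ a b ha0 hb0 hl0 hl1
      _ ≤ pr ^ l * δ ^ (1 - l) :=
          mul_le_mul (Real.rpow_le_rpow (Finset.sum_nonneg fun x _ => ha0 x) haEc hl0.le)
            (Real.rpow_le_rpow (Finset.sum_nonneg fun x _ => hb0 x) hbEc (by linarith))
            (Real.rpow_nonneg (Finset.sum_nonneg fun x _ => hb0 x) _)
            (Real.rpow_nonneg hpr0.le _)
      _ = δ * t := key2
  have hsplit : ∑ x, a x ^ l * b x ^ (1 - l)
      = (∑ x ∈ E, a x ^ l * b x ^ (1 - l)) + ∑ x ∈ Eᶜ, a x ^ l * b x ^ (1 - l) :=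
    (Finset.sum_add_sum_compl E _).symm
  have hStot : ∑ x, a x ^ l * b x ^ (1 - l) ≤ 2 * (δ * t) := by
    rw [hsplit]; linarith
  -- relate to betaAff
  have hbeta_eq : ∑ x, a x ^ l * b x ^ (1 - l)
      = δ * t ^ 2 * betaAff l P Q := by
    rw [← key3, betaAff, Finset.mul_sum]
    refine Finset.sum_congr rfl fun x _ => ?_
    rw [ha_def, hb_def]
    rw [Real.mul_rpow hpr0.le (hP0 x), Real.mul_rpow h1pr.le (hQ0 x)]
    ring
  have hbeta0 : 0 ≤ betaAff l P Q :=
    Finset.sum_nonneg fun x _ =>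
      mul_nonneg (Real.rpow_nonneg (hP0 x) _) (Real.rpow_nonneg (hQ0 x) _)
  have hbeta_le : δ * t ^ 2 * betaAff l P Q ≤ 2 * (δ * t) := by
    rw [← hbeta_eq]; exact hStot
  rw [ge_iff_le, mul_assoc, mul_assoc, ← mul_assoc (pr ^ l), key3]
  nlinarith [mul_nonneg (mul_nonneg hδ0.le (sq_nonneg t)) hbeta0, sq_nonneg (t * betaAff l P Q - 2), sq_nonneg (betaAff l P Q)]
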